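/- For any diversity game G = (R, B, (≻_i)) with |R| = 1, there exists a core stable partition. Specifically, letting Θ_r be the set of red ratios of individually rational coalitions containing the unique red agent r, the partition consisting of a coalition S* containing r with θ_R(S*) equal to r's most preferred ratio in Θ_r, together with singletons for all remaining blue agents, is core stable. -/
import Mathlib


open Finset

/-- The red ratio of a finite coalition. -/
def redRatio {α : Type*} (red : α → Prop) [DecidablePred red] (S : Finset α) : ℚ :=
  ((S.filter red).card : ℚ) / (S.card : ℚ)

/-- A coalition is individually rational if every member weakly prefers its red
ratio to that of her singleton (`1` for red agents, `0` for blue agents). -/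
def IndividuallyRational {α : Type*} (red : α → Prop) [DecidablePred red]
    (pref : α → ℚ → ℚ → Prop) (S : Finset α) : Prop :=
  ∀ i ∈ S, redRatio red S = (if red i then (1 : ℚ) else 0) ∨
    pref i (redRatio red S) (if red i then (1 : ℚ) else 0)

/-- In a diversity game with a single red agent `r`, the partition
consisting of an individually rational coalition `S*` containing `r` whose red
ratio is `r`'s most preferred ratio among red ratios of individually rational
coalitions containing `r`, together with singletons of the remaining blue agents,
is core stable. -/
theorem stmt1 {α : Type*} [Fintype α] [DecidableEq α] (red : α → Prop) [DecidablePred red]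
    (pref : α → ℚ → ℚ → Prop)
    (hirr : ∀ i (θ : ℚ), ¬ pref i θ θ)
    (htrans : ∀ i, Transitive (pref i))
    (hasym : ∀ i (θ θ' : ℚ), pref i θ θ' → ¬ pref i θ' θ)
    (r : α) (hr : univ.filter red = {r})
    (Sstar : Finset α) (hrS : r ∈ Sstar)
    (hIR : IndividuallyRational red pref Sstar)
    (hbest : ∀ S : Finset α, r ∈ S → IndividuallyRational red pref S →
      redRatio red S ≠ redRatio red Sstar → pref r (redRatio red Sstar) (redRatio red S))
    (π : Finset (Finset α))
    (hπ : π = insert Sstar ((univ \ Sstar).image fun b => ({b} : Finset α))) :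
    ¬ ∃ S : Finset α, S.Nonempty ∧
        ∀ i ∈ S, ∀ T ∈ π, i ∈ T → pref i (redRatio red S) (redRatio red T) := by
  rintro ⟨S, ⟨x, hx⟩, hblock⟩
  have hred : ∀ i, red i ↔ i = r := by
    intro i
    constructor
    · intro h
      have : i ∈ univ.filter red := by simp [h]
      rw [hr] at this; simpa using this
    · intro h
      subst h
      have : i ∈ univ.filter red := by rw [hr]; simp
      simpa using this
  have hsing : ∀ i, ¬ red i → redRatio red ({i} : Finset α) = 0 := by
    intro i hi
    simp [redRatio, filter_singleton, hi]
  have hmemπ : ∀ i, i ∉ Sstar → ({i} : Finset α) ∈ π := by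
    intro i hi
    rw [hπ]
    exact mem_insert_of_mem (mem_image.mpr ⟨i, by simp [hi], rfl⟩)
  have hSπ : Sstar ∈ π := by rw [hπ]; exact mem_insert_self _ _
  by_cases hrS' : r ∈ S
  · have hprefr : pref r (redRatio red S) (redRatio red Sstar) :=
      hblock r hrS' Sstar hSπ hrS
    have hne : redRatio red S ≠ redRatio red Sstar := by
      intro h; rw [h] at hprefr; exact hirr r _ hprefr
    have hredr : red r := (hred r).mpr rfl
    have hSIR : IndividuallyRational red pref S := by
      intro i hi
      by_cases hri : red i
      · have : i = r := (hred i).mp hri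
        subst this
        simp only [if_pos hri]
        rcases hIR i hrS with h1 | h1
        · rw [if_pos hri] at h1
          right; rw [← h1]; exact hprefr
        · rw [if_pos hri] at h1
          right; exact htrans i hprefr h1
      · simp only [if_neg hri]
        by_cases hiS : i ∈ Sstar
        · have hp : pref i (redRatio red S) (redRatio red Sstar) :=
            hblock i hi Sstar hSπ hiS
          rcases hIR i hiS with h1 | h1
          · rw [if_neg hri] at h1
            right; rw [← h1]; exact hp
          · rw [if_neg hri] at h1
            right; exact htrans i hp h1
        · have hp := hblock i hi {i} (hmemπ i hiS) (mem_singleton_self i)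
          right; rw [hsing i hri] at hp; exact hp
    exact hasym r _ _ hprefr (hbest S hrS' hSIR hne)
  · have hS0 : redRatio red S = 0 := by
      have hfe : S.filter red = ∅ := by
        rw [filter_eq_empty_iff]
        intro i hi hri
        exact hrS' (((hred i).mp hri) ▸ hi)
      simp [redRatio, hfe]
    have hxr : ¬ red x := fun h => hrS' (((hred x).mp h) ▸ hx)
    by_cases hxS : x ∈ Sstar
    · have hp := hblock x hx Sstar hSπ hxS
      rw [hS0] at hp
      rcases hIR x hxS with h1 | h1
      · rw [if_neg hxr] at h1; rw [h1] at hp; exact hirr x 0 hp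
      · rw [if_neg hxr] at h1; exact hasym x _ _ hp h1
    · have hp := hblock x hx {x} (hmemπ x hxS) (mem_singleton_self x)
      rw [hS0, hsing x hxr] at hp
      exact hirr x 0 hp
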